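/- Let H = (V, E) be a hypergraph with hyperedges of cardinality at most d in which every sunflower (whose core is not a petal) has at most d·(k+1) petals, and let W ⊆ E be a set of hyperedges such that every pair of distinct hyperedges in W intersects in at most d−2 vertices. Then |W| ≤ d! · d^d · (k+1)^(d−1). -/

import Mathlib

/-- A sunflower with core `C`: every pair of distinct hyperedges in `P`
intersects in exactly the set `C`. -/
def IsSunflower {α : Type*} [DecidableEq α] (P : Finset (Finset α)) (C : Finset α) : Prop :=
  ∀ e ∈ P, ∀ f ∈ P, e ≠ f → e ∩ f = C

open Finset

section Aux

variable {α : Type*} [DecidableEq α]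

/-- There is a popular element: some `x` lies in at least `|F|/(m·c)` hyperedges. -/
lemma popular_step (c m : ℕ) (F : Finset (Finset α)) (hm : 1 ≤ m)
    (hne : F.Nonempty)
    (hunif : ∀ e ∈ F, e.card = m)
    (hsun : ∀ P ⊆ F, ∀ C : Finset α, IsSunflower P C → C ∉ P → P.card ≤ c) :
    ∃ x : α, F.card ≤ m * c * (F.filter (fun e => x ∈ e)).card := by
  classical
  -- maximal pairwise disjoint subfamily
  set S : Finset (Finset (Finset α)) :=
    F.powerset.filter (fun D => ∀ e ∈ D, ∀ f ∈ D, e ≠ f → e ∩ f = ∅) with hS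
  have hSne : S.Nonempty := ⟨∅, by simp [hS]⟩
  obtain ⟨D, hDS, hDmax⟩ := S.exists_max_image Finset.card hSne
  have hDF : D ⊆ F := by
    have := (mem_filter.mp hDS).1; exact mem_powerset.mp this
  have hDdisj : ∀ e ∈ D, ∀ f ∈ D, e ≠ f → e ∩ f = ∅ := (mem_filter.mp hDS).2
  have hnonempty : ∀ e ∈ F, e ≠ ∅ := by
    intro e he h
    have := hunif e he
    rw [h] at this
    simp at this
    omega
  have hDc : D.card ≤ c := by
    refine hsun D hDF ∅ hDdisj ?_
    intro h
    exact hnonempty ∅ (hDF h) rfl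
  set U : Finset α := D.biUnion id with hU
  -- every edge meets U
  have hmeets : ∀ e ∈ F, ∃ x ∈ U, x ∈ e := by
    intro e he
    by_contra h
    push_neg at h
    have heU : e ∩ U = ∅ := by
      ext x; simp only [mem_inter, notMem_empty, iff_false]
      intro ⟨hx1, hx2⟩; exact h x hx2 hx1
    have heD : e ∉ D := by
      intro heD
      have hsub : e ⊆ U := fun x hx => mem_biUnion.mpr ⟨e, heD, hx⟩
      have : e ∩ U = e := inter_eq_left.mpr hsub
      rw [heU] at this
      exact hnonempty e he this.symm
    have hins : insert e D ∈ S := by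
      rw [hS, mem_filter, mem_powerset]
      constructor
      · exact insert_subset he hDF
      · have hedisj : ∀ g ∈ D, e ∩ g = ∅ := by
          intro g hg
          have hgU : g ⊆ U := fun x hx => mem_biUnion.mpr ⟨g, hg, hx⟩
          ext x; simp only [mem_inter, notMem_empty, iff_false]
          rintro ⟨hx1, hx2⟩; exact h x (hgU hx2) hx1
        intro a ha b hb hab
        rcases mem_insert.mp ha with ha' | ha'
        · rcases mem_insert.mp hb with hb' | hb'
          · exact absurd (ha'.trans hb'.symm) hab
          · rw [ha']; exact hedisj b hb'
        · rcases mem_insert.mp hb with hb' | hb'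
          · rw [hb', inter_comm]; exact hedisj a ha'
          · exact hDdisj a ha' b hb' hab
    have := hDmax _ hins
    rw [card_insert_of_notMem heD] at this
    omega
  -- U is nonempty
  obtain ⟨e0, he0⟩ := hne
  obtain ⟨x0, hx0U, _⟩ := hmeets e0 he0
  have hUne : U.Nonempty := ⟨x0, hx0U⟩
  -- |U| ≤ m * c
  have hUcard : U.card ≤ m * c := by
    calc U.card ≤ ∑ e ∈ D, (id e).card := card_biUnion_le
    _ ≤ ∑ _e ∈ D, m := by
        refine Finset.sum_le_sum ?_
        intro e he; simp [hunif e (hDF he)]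
    _ = D.card * m := by simp [mul_comm]
    _ ≤ c * m := Nat.mul_le_mul_right _ hDc
    _ = m * c := mul_comm _ _
  -- pick most popular x in U
  obtain ⟨x, hxU, hxmax⟩ := U.exists_max_image (fun x => (F.filter (fun e => x ∈ e)).card) hUne
  refine ⟨x, ?_⟩
  have hcover : F ⊆ U.biUnion (fun y => F.filter (fun e => y ∈ e)) := by
    intro e he
    obtain ⟨y, hyU, hye⟩ := hmeets e he
    exact mem_biUnion.mpr ⟨y, hyU, mem_filter.mpr ⟨he, hye⟩⟩
  calc F.card ≤ (U.biUnion (fun y => F.filter (fun e => y ∈ e))).card := card_le_card hcover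
    _ ≤ ∑ y ∈ U, (F.filter (fun e => y ∈ e)).card := card_biUnion_le
    _ ≤ ∑ _y ∈ U, (F.filter (fun e => x ∈ e)).card := Finset.sum_le_sum (fun y hy => hxmax y hy)
    _ = U.card * (F.filter (fun e => x ∈ e)).card := by simp [mul_comm]
    _ ≤ m * c * (F.filter (fun e => x ∈ e)).card := Nat.mul_le_mul_right _ hUcard

/-- The sunflower condition transfers to the link of `x`. -/
lemma link_sunflower (c : ℕ) (hc : 1 ≤ c) (F : Finset (Finset α)) (x : α)
    (hx : ∀ e ∈ F, x ∈ e)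
    (hsun : ∀ P ⊆ F, ∀ C : Finset α, IsSunflower P C → C ∉ P → P.card ≤ c) :
    ∀ P ⊆ F.image (fun e => e.erase x), ∀ C : Finset α,
      IsSunflower P C → C ∉ P → P.card ≤ c := by
  classical
  intro P hP C hsf hC
  rcases le_or_gt P.card 1 with h1 | h1
  · omega
  have hxP : ∀ e ∈ P, x ∉ e := by
    intro e he
    obtain ⟨f, _, rfl⟩ := mem_image.mp (hP he)
    exact notMem_erase x f
  set Q : Finset (Finset α) := P.image (insert x) with hQ
  have hQF : Q ⊆ F := by
    intro a ha
    obtain ⟨e, he, rfl⟩ := mem_image.mp ha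
    obtain ⟨f, hf, rfl⟩ := mem_image.mp (hP he)
    rwa [insert_erase (hx f hf)]
  have hinj : Set.InjOn (insert x) (P : Set (Finset α)) := by
    intro a ha b hb hab
    have : (insert x a).erase x = (insert x b).erase x := by rw [hab]
    rwa [erase_insert (hxP a (Finset.mem_coe.mp ha)),
      erase_insert (hxP b (Finset.mem_coe.mp hb))] at this
  have hQcard : Q.card = P.card := card_image_of_injOn hinj
  -- C does not contain x
  obtain ⟨e1, he1, e2, he2, hne⟩ := Finset.one_lt_card.mp h1
  have hCx : x ∉ C := by
    have := hsf e1 he1 e2 he2 hne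
    intro hxC
    rw [← this] at hxC
    exact hxP e1 he1 (mem_inter.mp hxC).1
  have hQsf : IsSunflower Q (insert x C) := by
    intro a ha b hb hab
    obtain ⟨e, he, rfl⟩ := mem_image.mp ha
    obtain ⟨f, hf, rfl⟩ := mem_image.mp hb
    have hef : e ≠ f := fun h => hab (by rw [h])
    have : insert x e ∩ insert x f = insert x (e ∩ f) := by
      ext y; simp only [mem_inter, mem_insert]; tauto
    rw [this, hsf e he f hf hef]
  have hQcore : insert x C ∉ Q := by
    intro h
    obtain ⟨e, he, heq⟩ := mem_image.mp h
    have : (insert x C).erase x = (insert x e).erase x := by rw [heq]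
    rw [erase_insert hCx, erase_insert (hxP e he)] at this
    exact hC (this ▸ he)
  have := hsun Q hQF (insert x C) hQsf hQcore
  omega

/-- Main sunflower-type bound: an `m`-uniform family with pairwise intersections
of size at most `r` in which every proper-core sunflower has at most `c` petals
has at most `m! · c^(r+1)` members. -/
lemma uniform_bound (c : ℕ) (hc : 1 ≤ c) :
    ∀ r m : ℕ, 1 ≤ m → ∀ F : Finset (Finset α),
    (∀ e ∈ F, e.card = m) →
    (∀ e ∈ F, ∀ f ∈ F, e ≠ f → (e ∩ f).card ≤ r) →
    (∀ P ⊆ F, ∀ C : Finset α, IsSunflower P C → C ∉ P → P.card ≤ c) →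
    F.card ≤ m.factorial * c ^ (r + 1) := by
  classical
  intro r
  induction r with
  | zero =>
    intro m hm F hunif hint hsun
    have hsf : IsSunflower F ∅ := by
      intro e he f hf hef
      exact card_eq_zero.mp (Nat.le_antisymm (hint e he f hf hef) (Nat.zero_le _))
    have h0 : (∅ : Finset α) ∉ F := by
      intro h
      have := hunif ∅ h
      simp at this
      omega
    calc F.card ≤ c := hsun F Finset.Subset.rfl ∅ hsf h0
      _ = 1 * c ^ 1 := by ring
      _ ≤ m.factorial * c ^ 1 := Nat.mul_le_mul_right _ m.factorial_pos
  | succ r ih =>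
    intro m hm F hunif hint hsun
    rcases F.eq_empty_or_nonempty with rfl | hne
    · simp
    rcases eq_or_lt_of_le hm with hm1 | hm2
    · -- m = 1 : family of singletons, pairwise disjoint
      have hsf : IsSunflower F ∅ := by
        intro e he f hf hef
        have he1 := hunif e he
        have hf1 := hunif f hf
        rw [← hm1] at he1 hf1
        obtain ⟨a, rfl⟩ := card_eq_one.mp he1
        obtain ⟨b, rfl⟩ := card_eq_one.mp hf1
        have : a ≠ b := fun h => hef (by rw [h])
        ext y; simp only [mem_inter, mem_singleton, notMem_empty, iff_false]
        rintro ⟨rfl, rfl⟩; exact this rfl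
      have h0 : (∅ : Finset α) ∉ F := by
        intro h
        have := hunif ∅ h
        simp at this
        omega
      calc F.card ≤ c := hsun F Finset.Subset.rfl ∅ hsf h0
        _ ≤ c ^ (r + 2) := Nat.le_self_pow (by omega) c
        _ ≤ m.factorial * c ^ (r + 2) := Nat.le_mul_of_pos_left _ m.factorial_pos
    · -- m ≥ 2
      obtain ⟨x, hxbound⟩ := popular_step c m F hm hne hunif hsun
      set Fx : Finset (Finset α) := F.filter (fun e => x ∈ e) with hFx
      have hFxF : Fx ⊆ F := filter_subset _ _
      have hxmem : ∀ e ∈ Fx, x ∈ e := fun e he => (mem_filter.mp he).2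
      set L : Finset (Finset α) := Fx.image (fun e => e.erase x) with hL
      have hinj : Set.InjOn (fun e : Finset α => e.erase x) (Fx : Set (Finset α)) := by
        intro a ha b hb hab
        simp only at hab
        have : insert x (a.erase x) = insert x (b.erase x) := by rw [hab]
        rwa [insert_erase (hxmem a (Finset.mem_coe.mp ha)),
          insert_erase (hxmem b (Finset.mem_coe.mp hb))] at this
      have hLcard : L.card = Fx.card := card_image_of_injOn hinj
      have hLunif : ∀ e ∈ L, e.card = m - 1 := by
        intro e he
        obtain ⟨f, hf, rfl⟩ := mem_image.mp he
        rw [card_erase_of_mem (hxmem f hf), hunif f (hFxF hf)]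
      have hLint : ∀ e ∈ L, ∀ f ∈ L, e ≠ f → (e ∩ f).card ≤ r := by
        intro e he f hf hef
        obtain ⟨a, ha, rfl⟩ := mem_image.mp he
        obtain ⟨b, hb, rfl⟩ := mem_image.mp hf
        have hab : a ≠ b := fun h => hef (by rw [h])
        have heq : a.erase x ∩ b.erase x = (a ∩ b).erase x := by
          ext y
          simp only [mem_inter, mem_erase]
          tauto
        rw [heq, card_erase_of_mem (mem_inter.mpr ⟨hxmem a ha, hxmem b hb⟩)]
        have := hint a (hFxF ha) b (hFxF hb) hab
        omega
      have hLsun := link_sunflower c hc Fx x hxmem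
        (fun P hP C hsf hC => hsun P (hP.trans hFxF) C hsf hC)
      have hLbound : L.card ≤ (m - 1).factorial * c ^ (r + 1) :=
        ih (m - 1) (by omega) L hLunif hLint hLsun
      calc F.card ≤ m * c * Fx.card := hxbound
        _ = m * c * L.card := by rw [hLcard]
        _ ≤ m * c * ((m - 1).factorial * c ^ (r + 1)) :=
            Nat.mul_le_mul_left _ hLbound
        _ = (m * (m - 1).factorial) * c ^ (r + 2) := by ring
        _ = m.factorial * c ^ (r + 2) := by
            congr 1
            obtain ⟨n, rfl⟩ : ∃ n, m = n + 1 := ⟨m - 1, by omega⟩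
            simp [Nat.factorial_succ]

end Aux

/-- In a hypergraph with hyperedges of size at most `d` (`d ≥ 2`) in which every
sunflower whose core is not a petal has at most `d·(k+1)` petals, every weakly
related set `W` (pairwise intersections of size at most `d-2`) satisfies
`|W| ≤ d! · d^d · (k+1)^(d-1)`. -/
theorem weakly_related_set_bound {α : Type*} [DecidableEq α]
    (E W : Finset (Finset α)) (d k : ℕ) (hd : 2 ≤ d)
    (hcard : ∀ e ∈ E, e.card ≤ d)
    (hsun : ∀ P ⊆ E, ∀ C : Finset α, IsSunflower P C → C ∉ P → P.card ≤ d * (k + 1))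
    (hW : W ⊆ E)
    (hwr : ∀ e ∈ W, ∀ f ∈ W, e ≠ f → (e ∩ f).card ≤ d - 2) :
    W.card ≤ d.factorial * d ^ d * (k + 1) ^ (d - 1) := by
  classical
  set c : ℕ := d * (k + 1) with hc
  have hc1 : 1 ≤ c := by rw [hc]; exact Nat.one_le_iff_ne_zero.mpr (by positivity)
  set Wl : ℕ → Finset (Finset α) := fun ℓ => W.filter (fun e => e.card = ℓ) with hWl
  have hWlsub : ∀ ℓ, Wl ℓ ⊆ W := fun ℓ => filter_subset _ _
  have hsplit : W.card = ∑ ℓ ∈ Finset.range (d + 1), (Wl ℓ).card := by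
    apply card_eq_sum_card_fiberwise
    intro e he
    exact mem_range.mpr (Nat.lt_succ_of_le (hcard e (hW he)))
  -- sunflower hypothesis restricted to each layer
  have hsunl : ∀ ℓ, ∀ P ⊆ Wl ℓ, ∀ C : Finset α, IsSunflower P C → C ∉ P → P.card ≤ c :=
    fun ℓ P hP C hsf hC => hsun P (hP.trans ((hWlsub ℓ).trans hW)) C hsf hC
  -- bound for small layers
  have hsmall : ∀ ℓ < d, (Wl ℓ).card ≤ (d - 1).factorial * c ^ (d - 1) := by
    intro ℓ hℓ
    rcases Nat.eq_zero_or_pos ℓ with rfl | hℓ1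
    · have : (Wl 0).card ≤ 1 := by
        apply Finset.card_le_one.mpr
        intro a ha b hb
        have ha0 : a = ∅ := card_eq_zero.mp (mem_filter.mp ha).2
        have hb0 : b = ∅ := card_eq_zero.mp (mem_filter.mp hb).2
        rw [ha0, hb0]
      calc (Wl 0).card ≤ 1 := this
        _ ≤ (d - 1).factorial * c ^ (d - 1) :=
            Nat.one_le_iff_ne_zero.mpr
              (Nat.mul_ne_zero (Nat.factorial_ne_zero _) (pow_ne_zero _ (by omega)))
    · have hint : ∀ e ∈ Wl ℓ, ∀ f ∈ Wl ℓ, e ≠ f → (e ∩ f).card ≤ (ℓ - 1) := by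
        intro e he f hf hef
        have hel : e.card = ℓ := (mem_filter.mp he).2
        have hfl : f.card = ℓ := (mem_filter.mp hf).2
        have hssub : e ∩ f ⊂ e := by
          refine ⟨inter_subset_left, ?_⟩
          intro hsub
          have hef' : e ⊆ f := (subset_inter_iff.mp (fun y hy => hsub hy)).2
          exact hef (Finset.eq_of_subset_of_card_le hef' (by omega))
        have := Finset.card_lt_card hssub
        omega
      have hb := uniform_bound c hc1 (ℓ - 1) ℓ hℓ1 (Wl ℓ)
        (fun e he => (mem_filter.mp he).2) hint (hsunl ℓ)
      have hℓeq : ℓ - 1 + 1 = ℓ := by omega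
      rw [hℓeq] at hb
      calc (Wl ℓ).card ≤ ℓ.factorial * c ^ ℓ := hb
        _ ≤ (d - 1).factorial * c ^ (d - 1) := by
            apply Nat.mul_le_mul
            · exact Nat.factorial_le (by omega)
            · exact Nat.pow_le_pow_right hc1 (by omega)
  -- bound for top layer
  have htop : (Wl d).card ≤ d.factorial * c ^ (d - 1) := by
    have hint : ∀ e ∈ Wl d, ∀ f ∈ Wl d, e ≠ f → (e ∩ f).card ≤ d - 2 := by
      intro e he f hf hef
      exact hwr e (hWlsub d he) f (hWlsub d hf) hef
    have hb := uniform_bound c hc1 (d - 2) d (by omega) (Wl d)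
      (fun e he => (mem_filter.mp he).2) hint (hsunl d)
    have : d - 2 + 1 = d - 1 := by omega
    rwa [this] at hb
  -- put it together
  have hsum : W.card ≤ 2 * (d.factorial * c ^ (d - 1)) := by
    rw [hsplit, Finset.sum_range_succ]
    have h1 : ∑ ℓ ∈ Finset.range d, (Wl ℓ).card ≤ d * ((d - 1).factorial * c ^ (d - 1)) := by
      calc ∑ ℓ ∈ Finset.range d, (Wl ℓ).card
          ≤ ∑ _ℓ ∈ Finset.range d, (d - 1).factorial * c ^ (d - 1) :=
            Finset.sum_le_sum (fun ℓ hℓ => hsmall ℓ (mem_range.mp hℓ))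
        _ = d * ((d - 1).factorial * c ^ (d - 1)) := by simp [mul_comm]
    have hdfac : d * (d - 1).factorial = d.factorial := by
      obtain ⟨n, rfl⟩ : ∃ n, d = n + 1 := ⟨d - 1, by omega⟩
      simp [Nat.factorial_succ]
    calc (∑ ℓ ∈ Finset.range d, (Wl ℓ).card) + (Wl d).card
        ≤ d * ((d - 1).factorial * c ^ (d - 1)) + d.factorial * c ^ (d - 1) :=
          Nat.add_le_add h1 htop
      _ = 2 * (d.factorial * c ^ (d - 1)) := by rw [← mul_assoc, hdfac]; ring
  have hfinal : 2 * (d.factorial * c ^ (d - 1)) ≤ d.factorial * d ^ d * (k + 1) ^ (d - 1) := by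
    have hrhs : d.factorial * d ^ d * (k + 1) ^ (d - 1) = d * (d.factorial * c ^ (d - 1)) := by
      obtain ⟨n, rfl⟩ : ∃ n, d = n + 1 := ⟨d - 1, by omega⟩
      rw [hc, mul_pow]
      simp only [Nat.add_sub_cancel, pow_succ]
      ring
    rw [hrhs]
    exact Nat.mul_le_mul_right _ hd
  exact hsum.trans hfinal
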